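/- Let v_k : X → ℝ be continuous and u_k : X → ℝ continuous with u_k > 0 on a compact set X, for k = 1,…,K. Define F(x) = min_k v_k(x)/u_k(x) and, for μ ∈ ℝ, G(μ) = max_{x∈X} min_k (v_k(x) − μ u_k(x)). Then μ* = max_{x∈X} F(x) satisfies G(μ*) = 0, and conversely if G(μ) = 0 then μ = μ*. Moreover G is strictly decreasing in μ. -/
import Mathlib


open Matrix

/-- Generalized Dinkelbach principle: for continuous `v_k` and continuous positive `u_k`
on a nonempty compact set `X`, with `F(x) = min_k v_k(x)/u_k(x)` and
`G(μ) = max_{x∈X} min_k (v_k(x) − μ u_k(x))`, the value `μ* = max_{x∈X} F(x)` is the unique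
root of `G`, and `G` is strictly decreasing. -/
theorem generalized_dinkelbach {E : Type*} [TopologicalSpace E] {K : ℕ} (hK : 0 < K)
    (X : Set E) (hX : IsCompact X) (hne : X.Nonempty)
    (v u : Fin K → E → ℝ)
    (hv : ∀ k, ContinuousOn (v k) X) (hu : ∀ k, ContinuousOn (u k) X)
    (hupos : ∀ k, ∀ x ∈ X, 0 < u k x)
    (F : E → ℝ) (hF : ∀ x, F x = ⨅ k, v k x / u k x)
    (G : ℝ → ℝ)
    (hG : ∀ μ', G μ' = sSup ((fun x => ⨅ k, (v k x - μ' * u k x)) '' X))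
    (μstar : ℝ) (hμ : μstar = sSup (F '' X)) :
    G μstar = 0 ∧ (∀ μ', G μ' = 0 → μ' = μstar) ∧ StrictAnti G := by
  haveI : Nonempty (Fin K) := ⟨⟨0, hK⟩⟩
  set g : ℝ → E → ℝ := fun μ x => ⨅ k, (v k x - μ * u k x) with hg
  -- basic iInf facts
  have hbdd : ∀ (f : Fin K → ℝ), BddBelow (Set.range f) :=
    fun f => (Set.finite_range f).bddBelow
  have hinf_le : ∀ (f : Fin K → ℝ) k, (⨅ j, f j) ≤ f k :=
    fun f k => ciInf_le (hbdd f) k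
  -- continuity of g μ on X
  have hgc : ∀ μ, ContinuousOn (g μ) X := by
    intro μ
    have h1 : ContinuousOn
        (fun a => Finset.univ.inf' Finset.univ_nonempty (fun k => v k a - μ * u k a)) X :=
      ContinuousOn.finset_inf'_apply Finset.univ_nonempty
        (fun k _ => (hv k).sub (continuousOn_const.mul (hu k)))
    refine h1.congr fun x _ => ?_
    simp [hg, Finset.inf'_univ_eq_ciInf]
  -- continuity of F on X
  have hFc : ContinuousOn F X := by
    have h1 : ContinuousOn
        (fun a => Finset.univ.inf' Finset.univ_nonempty (fun k => v k a / u k a)) X :=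
      ContinuousOn.finset_inf'_apply Finset.univ_nonempty
        (fun k _ => (hv k).div (hu k) (fun x hx => (hupos k x hx).ne'))
    refine h1.congr fun x _ => ?_
    simp [hF, Finset.inf'_univ_eq_ciInf]
  -- sup attained and upper bound
  have attain : ∀ μ, ∃ x ∈ X, G μ = g μ x := by
    intro μ
    obtain ⟨x, hx, hsup⟩ := hX.exists_sSup_image_eq hne (hgc μ)
    exact ⟨x, hx, by rw [hG]; exact hsup⟩
  have hle : ∀ μ, ∀ x ∈ X, g μ x ≤ G μ := by
    intro μ x hx
    rw [hG]
    exact le_csSup (hX.image_of_continuousOn (hgc μ)).bddAbove ⟨x, hx, rfl⟩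
  -- F attains its max
  obtain ⟨xs, hxs, hxsSup⟩ := hX.exists_sSup_image_eq hne hFc
  have hμstar : μstar = F xs := by rw [hμ, hxsSup]
  have hFle : ∀ x ∈ X, F x ≤ μstar := by
    intro x hx
    rw [hμ]
    exact le_csSup (hX.image_of_continuousOn hFc).bddAbove ⟨x, hx, rfl⟩
  -- G μstar = 0
  have hG0 : G μstar = 0 := by
    have hge : (0 : ℝ) ≤ G μstar := by
      refine le_trans ?_ (hle μstar xs hxs)
      refine le_ciInf fun k => ?_
      have h1 : μstar ≤ v k xs / u k xs := by
        rw [hμstar, hF]; exact hinf_le _ k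
      have h2 := (le_div_iff₀ (hupos k xs hxs)).mp h1
      linarith
    have hle0 : G μstar ≤ 0 := by
      rw [hG]
      refine csSup_le (hne.image _) ?_
      rintro y ⟨x, hx, rfl⟩
      obtain ⟨k0, hk0⟩ := exists_eq_ciInf_of_finite (f := fun k => v k x / u k x)
      have h1 : v k0 x / u k0 x ≤ μstar := by
        rw [hk0, ← hF]; exact hFle x hx
      have h2 := (div_le_iff₀ (hupos k0 x hx)).mp h1
      have h3 : (⨅ k, (v k x - μstar * u k x)) ≤ v k0 x - μstar * u k0 x :=
        hinf_le _ k0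
      linarith
    linarith
  -- strict antitonicity
  have hanti : StrictAnti G := by
    intro μ1 μ2 h12
    obtain ⟨x, hx, hGx⟩ := attain μ2
    obtain ⟨k0, hk0⟩ := exists_eq_ciInf_of_finite (f := fun k => v k x - μ1 * u k x)
    have h1 : g μ2 x ≤ v k0 x - μ2 * u k0 x := hinf_le _ k0
    have h2 : v k0 x - μ2 * u k0 x < v k0 x - μ1 * u k0 x := by
      have := hupos k0 x hx
      nlinarith
    have h3 : v k0 x - μ1 * u k0 x = g μ1 x := hk0
    calc G μ2 = g μ2 x := hGx
      _ < g μ1 x := by linarith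
      _ ≤ G μ1 := hle μ1 x hx
  refine ⟨hG0, fun μ' hμ' => ?_, hanti⟩
  rcases lt_trichotomy μ' μstar with h | h | h
  · have := hanti h; rw [hG0, hμ'] at this; linarith
  · exact h
  · have := hanti h; rw [hG0, hμ'] at this; linarith
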